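/- Let G be a Frobenius group with abelian kernel N and abelian complement H. Then the number of conjugacy classes of G is k(G) = (|N|−1)/|H| + |H|, and more generally the number β_{G,n} of simultaneous conjugacy classes of commuting n-tuples satisfies (β_{G,n} − β_{G,n−1}) = (1/|H|)(|N|^n − |N|^{n−1}) + (|H|^n − |H|^{n−1}) for n ≥ 1, equivalently (1−t)B_G(t) = 1 + ((|N|−1)t)/(|H|(1−|N|t)) + ((|H|−1)t)/(1−|H|t). -/

import Mathlib

/-- Number of orbits of `G` acting on `G^n` by simultaneous conjugation. -/
noncomputable def alphaOrbits (G : Type*) [Group G] (n : ℕ) : ℕ :=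
  Nat.card (Quotient (MulAction.orbitRel (ConjAct G) (Fin n → G)))

/-- Pairwise commuting `n`-tuples as a sub-`MulAction` of the conjugation action. -/
def commTuples (G : Type*) [Group G] (n : ℕ) : SubMulAction (ConjAct G) (Fin n → G) where
  carrier := {x | ∀ i j, Commute (x i) (x j)}
  smul_mem' := by
    intro g x hx i j
    have h := (hx i j).map (MulAut.conj (ConjAct.ofConjAct g)).toMonoidHom
    simpa [ConjAct.smul_def, MulAut.conj_apply, mul_assoc] using h

/-- Number of orbits of `G` acting on pairwise-commuting `n`-tuples by
simultaneous conjugation. -/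
noncomputable def betaOrbits (G : Type*) [Group G] (n : ℕ) : ℕ :=
  Nat.card (Quotient (MulAction.orbitRel (ConjAct G) (commTuples G n)))


set_option linter.unusedSectionVars false

open MulAction


section General

variable {Γ : Type*} [Group Γ]

/-- An equivariant equivalence induces an equivalence of orbit quotients. -/
noncomputable def quotCongr {X Y : Type*} [MulAction Γ X] [MulAction Γ Y]
    (e : X ≃ Y) (he : ∀ (g : Γ) (x : X), e (g • x) = g • e x) :
    Quotient (orbitRel Γ X) ≃ Quotient (orbitRel Γ Y) :=
  Quotient.congr e (by
    intro a b
    rw [orbitRel_apply, orbitRel_apply, mem_orbit_iff, mem_orbit_iff]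
    constructor
    · rintro ⟨g, rfl⟩; exact ⟨g, (he g b).symm⟩
    · rintro ⟨g, hg⟩; exact ⟨g, e.injective (by rw [he g b, hg])⟩)

/-- Orbit quotient of a sum action. -/
noncomputable def quotSum {A B : Type*} [MulAction Γ A] [MulAction Γ B] :
    Quotient (orbitRel Γ (A ⊕ B)) ≃ (Quotient (orbitRel Γ A)) ⊕ (Quotient (orbitRel Γ B)) where
  toFun := Quotient.lift
    (fun x => Sum.map (fun a => Quotient.mk (orbitRel Γ A) a) (fun b => Quotient.mk (orbitRel Γ B) b) x)
    (by
      rintro x y ⟨g, rfl⟩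
      cases y with
      | inl a => exact congrArg Sum.inl (Quotient.sound ⟨g, rfl⟩)
      | inr b => exact congrArg Sum.inr (Quotient.sound ⟨g, rfl⟩))
  invFun := Sum.elim
    (Quotient.lift (fun a => Quotient.mk (orbitRel Γ (A ⊕ B)) (Sum.inl a))
      (by rintro a b ⟨g, rfl⟩
          exact Quotient.sound ⟨g, rfl⟩))
    (Quotient.lift (fun b => Quotient.mk (orbitRel Γ (A ⊕ B)) (Sum.inr b))
      (by rintro a b ⟨g, rfl⟩
          exact Quotient.sound ⟨g, rfl⟩))
  left_inv := by
    refine Quotient.ind ?_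
    rintro (a | b) <;> rfl
  right_inv := by
    rintro (qa | qb)
    · exact Quotient.inductionOn qa (fun a => rfl)
    · exact Quotient.inductionOn qb (fun b => rfl)

/-- If all stabilizers have cardinality `s`, then (#orbits) * |Γ| = |X| * s. -/
theorem card_quot_mul {X : Type*} [Finite Γ] [MulAction Γ X] [Finite X] (s : ℕ)
    (hs : ∀ x : X, Nat.card (stabilizer Γ x) = s) :
    Nat.card (Quotient (orbitRel Γ X)) * Nat.card Γ = Nat.card X * s := by
  classical
  cases nonempty_fintype Γ
  have : Fintype X := Fintype.ofFinite X
  have e := selfEquivSigmaOrbits Γ X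
  have : Fintype (Quotient (orbitRel Γ X)) := Fintype.ofFinite _
  have hX : Nat.card X = ∑ ω : Quotient (orbitRel Γ X),
      Nat.card (orbit Γ (Quotient.out ω)) := by
    rw [Nat.card_congr e]
    have : ∀ ω : orbitRel.Quotient Γ X, Fintype (orbit Γ (Quotient.out ω)) :=
      fun ω => Fintype.ofFinite _
    rw [Nat.card_eq_fintype_card]
    rw [Fintype.card_sigma]
    exact Finset.sum_congr rfl (fun ω _ => (Nat.card_eq_fintype_card).symm)
  have horb : ∀ x : X, Nat.card (orbit Γ x) * s = Nat.card Γ := by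
    intro x
    have := MulAction.card_orbit_mul_card_stabilizer_eq_card_group Γ x
    rw [← Nat.card_eq_fintype_card, ← Nat.card_eq_fintype_card, ← Nat.card_eq_fintype_card] at this
    rw [← hs x]; exact this
  calc Nat.card (Quotient (orbitRel Γ X)) * Nat.card Γ
      = ∑ _ω : Quotient (orbitRel Γ X), Nat.card Γ := by
        rw [Finset.sum_const, Finset.card_univ, Nat.card_eq_fintype_card, smul_eq_mul]
    _ = ∑ ω : Quotient (orbitRel Γ X), Nat.card (orbit Γ (Quotient.out ω)) * s := by
        exact Finset.sum_congr rfl (fun ω _ => (horb _).symm)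
    _ = Nat.card X * s := by rw [hX, Finset.sum_mul]

theorem card_quot_one {X : Type*} [MulAction Γ X] [Subsingleton X] [Nonempty X] :
    Nat.card (Quotient (orbitRel Γ X)) = 1 := by
  haveI : Nonempty (Quotient (orbitRel Γ X)) := ⟨⟦Classical.arbitrary X⟧⟩
  exact Nat.card_eq_one_iff_unique.2 ⟨inferInstance, inferInstance⟩

end General

section FrobFacts

variable {G : Type*} [Group G]

/-- The conjugate subgroup `a H a⁻¹`. -/
def conjSub (H : Subgroup G) (a : G) : Subgroup G := H.map (MulAut.conj a).toMonoidHom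

theorem mem_conjSub {H : Subgroup G} {a x : G} : x ∈ conjSub H a ↔ a⁻¹ * x * a ∈ H := by
  constructor
  · rintro ⟨y, hy, rfl⟩
    simpa [MulAut.conj_apply, mul_assoc] using hy
  · intro h
    exact ⟨a⁻¹ * x * a, h, by simp [MulAut.conj_apply]; group⟩

variable {H N : Subgroup G}
  (hHbot : H ≠ ⊥)
  (hfrob : ∀ g : G, g ∉ H → H ⊓ H.map (MulAut.conj g).toMonoidHom = ⊥)
  (hN : (N : Set G) =
      (Set.univ \ ⋃ g : G, (H.map (MulAut.conj g).toMonoidHom : Set G)) ∪ {1})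

theorem conjSub_eq_of_mem {a b : G} (h : a⁻¹ * b ∈ H) : conjSub H a = conjSub H b := by
  ext x
  rw [mem_conjSub, mem_conjSub]
  have e : b⁻¹ * x * b = (a⁻¹ * b)⁻¹ * (a⁻¹ * x * a) * (a⁻¹ * b) := by group
  constructor
  · intro hx
    rw [e]; exact mul_mem (mul_mem (inv_mem h) hx) h
  · intro hx
    have : (a⁻¹ * b) * (b⁻¹ * x * b) * (a⁻¹ * b)⁻¹ ∈ H := mul_mem (mul_mem h hx) (inv_mem h)
    have e2 : a⁻¹ * x * a = (a⁻¹ * b) * (b⁻¹ * x * b) * (a⁻¹ * b)⁻¹ := by group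
    rwa [e2]

include hfrob in
theorem conjSub_disjoint {a b : G} (h : a⁻¹ * b ∉ H) : conjSub H a ⊓ conjSub H b = ⊥ := by
  have h2 := hfrob _ h
  rw [Subgroup.eq_bot_iff_forall] at h2 ⊢
  intro x hx
  rw [Subgroup.mem_inf, mem_conjSub, mem_conjSub] at hx
  have : a⁻¹ * x * a ∈ H ⊓ H.map (MulAut.conj (a⁻¹ * b)).toMonoidHom := by
    rw [Subgroup.mem_inf]
    refine ⟨hx.1, ?_⟩
    show a⁻¹ * x * a ∈ conjSub H (a⁻¹ * b)
    rw [mem_conjSub]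
    have e : (a⁻¹ * b)⁻¹ * (a⁻¹ * x * a) * (a⁻¹ * b) = b⁻¹ * x * b := by group
    rw [e]; exact hx.2
  have h1 : a⁻¹ * x * a = 1 := h2 _ this
  have : x = a * 1 * a⁻¹ := by
    rw [← h1]; group
  simpa using this

include hfrob hHbot in
theorem conjSub_eq_or_disjoint (a b : G) :
    conjSub H a = conjSub H b ∨ conjSub H a ⊓ conjSub H b = ⊥ := by
  by_cases h : a⁻¹ * b ∈ H
  · exact Or.inl (conjSub_eq_of_mem h)
  · exact Or.inr (conjSub_disjoint hfrob h)

include hfrob hHbot in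
theorem mem_of_conjSub_eq {a b : G} (h : conjSub H a = conjSub H b) : a⁻¹ * b ∈ H := by
  by_contra hc
  have h2 := conjSub_disjoint hfrob hc
  rw [h, inf_idem] at h2
  -- conjSub H b = ⊥ contradicts H ≠ ⊥
  apply hHbot
  rw [Subgroup.eq_bot_iff_forall] at h2 ⊢
  intro x hx
  have : b * x * b⁻¹ ∈ conjSub H b := by
    rw [mem_conjSub]
    have e : b⁻¹ * (b * x * b⁻¹) * b = x := by group
    rwa [e]
  have := h2 _ this
  have e : x = b⁻¹ * (b * x * b⁻¹) * b := by group
  rw [e, this]; group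

include hfrob hHbot in
/-- Centralizer of a nontrivial element of a conjugate of `H` lies in that conjugate. -/
theorem mem_conjSub_of_commute {a x y : G} (hx : x ∈ conjSub H a) (hx1 : x ≠ 1)
    (hc : y * x = x * y) : y ∈ conjSub H a := by
  have hxy : x ∈ conjSub H (y * a) := by
    rw [mem_conjSub]
    have e : (y * a)⁻¹ * x * (y * a) = a⁻¹ * (y⁻¹ * x * y) * a := by group
    have e2 : y⁻¹ * x * y = x := by
      rw [mul_assoc, ← hc]; group
    rw [e, e2]
    exact mem_conjSub.1 hx
  rcases conjSub_eq_or_disjoint hHbot hfrob a (y * a) with h | h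
  · have := mem_of_conjSub_eq hHbot hfrob h
    rw [mem_conjSub]
    have e : a⁻¹ * y * a = a⁻¹ * (y * a) := by group
    rw [e]; exact this
  · exfalso
    apply hx1
    have : x ∈ conjSub H a ⊓ conjSub H (y * a) := Subgroup.mem_inf.2 ⟨hx, hxy⟩
    rw [h] at this
    simpa using this

include hN in
theorem eq_one_of_mem_inter {a x : G} (hxN : x ∈ N) (hxa : x ∈ conjSub H a) : x = 1 := by
  have : x ∈ (N : Set G) := hxN
  rw [hN] at this
  rcases this with ⟨_, hdiff⟩ | h1
  · exfalso
    exact hdiff (Set.mem_iUnion.2 ⟨a, hxa⟩)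
  · simpa using h1

include hN in
theorem mem_N_or_conjSub (x : G) : x ∈ N ∨ ∃ a, x ∈ conjSub H a := by
  by_cases h : ∃ a, x ∈ conjSub H a
  · exact Or.inr h
  · left
    show x ∈ (N : Set G)
    rw [hN]
    left
    exact ⟨trivial, fun hx => h (by simpa [conjSub] using Set.mem_iUnion.1 hx)⟩

include hN hfrob hHbot in
theorem mem_N_of_commute {x y : G} (hx : x ∈ N) (hx1 : x ≠ 1) (hc : y * x = x * y) :
    y ∈ N := by
  by_cases hy1 : y = 1
  · subst hy1; exact N.one_mem
  rcases mem_N_or_conjSub (H := H) hN y with h | ⟨a, ha⟩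
  · exact h
  · have : x ∈ conjSub H a := mem_conjSub_of_commute hHbot hfrob ha hy1 (by rw [hc])
    exact absurd (eq_one_of_mem_inter hN hx this) hx1

include hN in
/-- `N` is closed under conjugation. -/
theorem conj_mem_N {x : G} (hx : x ∈ N) (g : G) : g * x * g⁻¹ ∈ N := by
  have hxs : x ∈ (N : Set G) := hx
  rw [hN] at hxs
  rcases hxs with ⟨_, hdiff⟩ | h1
  · show g * x * g⁻¹ ∈ (N : Set G)
    rw [hN]
    left
    refine ⟨trivial, fun hmem => ?_⟩
    obtain ⟨a, ha⟩ := Set.mem_iUnion.1 hmem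
    apply hdiff
    refine Set.mem_iUnion.2 ⟨g⁻¹ * a, ?_⟩
    show x ∈ conjSub H (g⁻¹ * a)
    rw [mem_conjSub]
    have : g * x * g⁻¹ ∈ conjSub H a := ha
    rw [mem_conjSub] at this
    have e : (g⁻¹ * a)⁻¹ * x * (g⁻¹ * a) = a⁻¹ * (g * x * g⁻¹) * a := by group
    rw [e]; exact this
  · simp at h1
    subst h1
    simpa using N.one_mem

theorem conjSub_comm (hHab : ∀ x ∈ H, ∀ y ∈ H, x * y = y * x) {a u v : G}
    (hu : u ∈ conjSub H a) (hv : v ∈ conjSub H a) : u * v = v * u := by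
  rw [mem_conjSub] at hu hv
  have := hHab _ hu _ hv
  have e : u * v = a * ((a⁻¹ * u * a) * (a⁻¹ * v * a)) * a⁻¹ := by group
  have e2 : v * u = a * ((a⁻¹ * v * a) * (a⁻¹ * u * a)) * a⁻¹ := by group
  rw [e, e2, this]

end FrobFacts

section Pieces

variable {G : Type*} [Group G] (H N : Subgroup G)

/-- The conjugate of `H` indexed by a left coset. -/
def Kbar (q : G ⧸ H) : Subgroup G :=
  Quotient.liftOn' q (conjSub H)
    (fun _ _ h => conjSub_eq_of_mem (QuotientGroup.leftRel_apply.1 h))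

theorem Kbar_mk (a : G) : Kbar H (a : G ⧸ H) = conjSub H a := rfl

theorem Kbar_injective (hHbot : H ≠ ⊥)
    (hfrob : ∀ g : G, g ∉ H → H ⊓ H.map (MulAut.conj g).toMonoidHom = ⊥) :
    Function.Injective (Kbar H) := by
  intro q q' h
  induction q using Quotient.inductionOn' with
  | h a =>
  induction q' using Quotient.inductionOn' with
  | h b =>
  rw [show Quotient.mk'' a = (a : G ⧸ H) from rfl, show Quotient.mk'' b = (b : G ⧸ H) from rfl,
    Kbar_mk, Kbar_mk] at *
  exact (QuotientGroup.eq).2 (mem_of_conjSub_eq hHbot hfrob h)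

theorem card_conjSub [Finite G] (a : G) : Nat.card (conjSub H a) = Nat.card H :=
  (Nat.card_congr (H.equivMapOfInjective _ (MulAut.conj a).injective).toEquiv).symm

theorem card_Kbar [Finite G] (q : G ⧸ H) : Nat.card (Kbar H q) = Nat.card H := by
  induction q using Quotient.inductionOn' with
  | h a => exact card_conjSub H a

variable (n : ℕ)

/-- All-identity tuples. -/
def pieceOne : SubMulAction (ConjAct G) (Fin n → G) where
  carrier := {x | ∀ i, x i = 1}
  smul_mem' := by
    intro g x hx i
    simp [Pi.smul_apply, ConjAct.smul_def, hx i]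

/-- Tuples with values in `N`, not all `1`. -/
def pieceN (hN : (N : Set G) =
      (Set.univ \ ⋃ g : G, (H.map (MulAut.conj g).toMonoidHom : Set G)) ∪ {1}) :
    SubMulAction (ConjAct G) (Fin n → G) where
  carrier := {x | (∀ i, x i ∈ N) ∧ ¬ ∀ i, x i = 1}
  smul_mem' := by
    intro g x hx
    refine ⟨fun i => ?_, fun h => hx.2 (fun i => ?_)⟩
    · rw [Pi.smul_apply, ConjAct.smul_def]
      exact conj_mem_N hN (hx.1 i) _
    · have := h i
      rw [Pi.smul_apply, ConjAct.smul_def] at this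
      have e : x i = (ConjAct.ofConjAct g)⁻¹ * (ConjAct.ofConjAct g * x i *
          (ConjAct.ofConjAct g)⁻¹) * ConjAct.ofConjAct g := by group
      rw [e, this]; group

/-- Tuples with values in a conjugate of `H`, not all `1`. -/
def pieceH : SubMulAction (ConjAct G) (Fin n → G) where
  carrier := {x | (∃ a, ∀ i, x i ∈ conjSub H a) ∧ ¬ ∀ i, x i = 1}
  smul_mem' := by
    intro g x hx
    obtain ⟨⟨a, ha⟩, hne⟩ := hx
    refine ⟨⟨ConjAct.ofConjAct g * a, fun i => ?_⟩, fun h => hne (fun i => ?_)⟩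
    · rw [Pi.smul_apply, ConjAct.smul_def, mem_conjSub]
      have := mem_conjSub.1 (ha i)
      have e : (ConjAct.ofConjAct g * a)⁻¹ * (ConjAct.ofConjAct g * x i *
          (ConjAct.ofConjAct g)⁻¹) * (ConjAct.ofConjAct g * a) = a⁻¹ * x i * a := by group
      rw [e]; exact this
    · have := h i
      rw [Pi.smul_apply, ConjAct.smul_def] at this
      have e : x i = (ConjAct.ofConjAct g)⁻¹ * (ConjAct.ofConjAct g * x i *
          (ConjAct.ofConjAct g)⁻¹) * ConjAct.ofConjAct g := by group
      rw [e, this]; group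

end Pieces

section Cards

variable {G : Type*} [Group G] (H N : Subgroup G)

theorem card_tuple_ne (β : Type*) [Fintype β] [One β] (n : ℕ) :
    Nat.card {f : Fin n → β // ¬ ∀ i, f i = 1} = Fintype.card β ^ n - 1 := by
  classical
  have e : {f : Fin n → β // ¬ ∀ i, f i = 1} ≃ {f : Fin n → β // ¬ f = (fun _ => 1)} :=
    Equiv.subtypeEquivRight (fun f => by rw [funext_iff])
  rw [Nat.card_congr e, Nat.card_eq_fintype_card, Fintype.card_subtype_compl,
    Fintype.card_subtype_eq, Fintype.card_fun, Fintype.card_fin]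

theorem card_pieceN [Fintype G] (n : ℕ) (hN : (N : Set G) =
      (Set.univ \ ⋃ g : G, (H.map (MulAut.conj g).toMonoidHom : Set G)) ∪ {1}) :
    Nat.card (pieceN H N n hN) = Nat.card N ^ n - 1 := by
  classical
  have e : (pieceN H N n hN : Type _) ≃ {f : Fin n → N // ¬ ∀ i, f i = 1} :=
    { toFun := fun x => ⟨fun i => ⟨x.1 i, x.2.1 i⟩,
        fun h => x.2.2 (fun i => by simpa [Subtype.ext_iff] using h i)⟩
      invFun := fun f => ⟨fun i => (f.1 i : G), ⟨fun i => (f.1 i).2,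
        fun h => f.2 (fun i => Subtype.ext (h i))⟩⟩
      left_inv := fun x => rfl
      right_inv := fun f => rfl }
  rw [Nat.card_congr e, card_tuple_ne, Nat.card_eq_fintype_card]

theorem exists_conjSub_of_Kbar {n : ℕ} (q : G ⧸ H) (f : Fin n → (Kbar H q)) :
    ∃ a, ∀ i, (f i : G) ∈ conjSub H a := by
  induction q using Quotient.inductionOn' with
  | h a => exact ⟨a, fun i => (f i).2⟩

theorem Kbar_eq_of_mem' (hHbot : H ≠ ⊥)
    (hfrob : ∀ g : G, g ∉ H → H ⊓ H.map (MulAut.conj g).toMonoidHom = ⊥)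
    {q q' : G ⧸ H} {x : G} (hx : x ∈ Kbar H q) (hx' : x ∈ Kbar H q') (h1 : x ≠ 1) :
    q = q' := by
  apply Kbar_injective H hHbot hfrob
  induction q using Quotient.inductionOn' with
  | h a =>
  induction q' using Quotient.inductionOn' with
  | h b =>
  rcases conjSub_eq_or_disjoint hHbot hfrob a b with h | h
  · exact h
  · exfalso
    apply h1
    have : x ∈ conjSub H a ⊓ conjSub H b := Subgroup.mem_inf.2 ⟨hx, hx'⟩
    rw [h] at this
    simpa using this

noncomputable def pieceHEquiv (n : ℕ) (hHbot : H ≠ ⊥)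
    (hfrob : ∀ g : G, g ∉ H → H ⊓ H.map (MulAut.conj g).toMonoidHom = ⊥) :
    (Σ q : G ⧸ H, {f : Fin n → (Kbar H q) // ¬ ∀ i, f i = 1}) ≃ pieceH H n := by
  refine Equiv.ofBijective
    (fun s => ⟨fun i => (s.2.1 i : G),
      ⟨exists_conjSub_of_Kbar H s.1 s.2.1, fun h => s.2.2 (fun i => Subtype.ext (h i))⟩⟩)
    ⟨?_, ?_⟩
  · rintro ⟨q, f, hf⟩ ⟨q', f', hf'⟩ h
    have hval : ∀ i, (f i : G) = (f' i : G) := by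
      intro i
      exact congrFun (congrArg Subtype.val h) i
    obtain ⟨i0, hi0⟩ := not_forall.1 hf
    have hne : (f i0 : G) ≠ 1 := fun hc => hi0 (Subtype.ext hc)
    have hqq : q = q' := by
      refine Kbar_eq_of_mem' H hHbot hfrob (f i0).2 ?_ hne
      rw [hval i0]; exact (f' i0).2
    subst hqq
    have : f = f' := funext (fun i => Subtype.ext (hval i))
    subst this
    rfl
  · rintro ⟨x, ⟨⟨a, ha⟩, hne⟩⟩
    refine ⟨⟨(a : G ⧸ H), fun i => ⟨x i, by rw [Kbar_mk]; exact ha i⟩,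
      fun h => hne (fun i => by simpa [Subtype.ext_iff] using h i)⟩, ?_⟩
    rfl

theorem card_pieceH [Fintype G] (n : ℕ) (hHbot : H ≠ ⊥)
    (hfrob : ∀ g : G, g ∉ H → H ⊓ H.map (MulAut.conj g).toMonoidHom = ⊥) :
    Nat.card (pieceH H n) = Nat.card (G ⧸ H) * (Nat.card H ^ n - 1) := by
  classical
  rw [← Nat.card_congr (pieceHEquiv H n hHbot hfrob)]
  have hcard : ∀ q : G ⧸ H, Nat.card {f : Fin n → (Kbar H q) // ¬ ∀ i, f i = 1}
      = Nat.card H ^ n - 1 := by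
    intro q
    rw [card_tuple_ne, ← Nat.card_eq_fintype_card, card_Kbar]
  haveI : Fintype (G ⧸ H) := Fintype.ofFinite _
  haveI : ∀ q : G ⧸ H, Fintype {f : Fin n → (Kbar H q) // ¬ ∀ i, f i = 1} :=
    fun q => Fintype.ofFinite _
  rw [Nat.card_eq_fintype_card, Fintype.card_sigma]
  calc ∑ q : G ⧸ H, Fintype.card {f : Fin n → (Kbar H q) // ¬ ∀ i, f i = 1}
      = ∑ _q : G ⧸ H, (Nat.card H ^ n - 1) := by
        refine Finset.sum_congr rfl (fun q _ => ?_)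
        rw [← Nat.card_eq_fintype_card, hcard q]
    _ = Nat.card (G ⧸ H) * (Nat.card H ^ n - 1) := by
        rw [Finset.sum_const, Finset.card_univ, smul_eq_mul,
          Nat.card_eq_fintype_card (α := G ⧸ H)]

end Cards

section Stab

variable {G : Type*} [Group G] (H N : Subgroup G)

theorem stab_eq_ambient {n : ℕ} (S : SubMulAction (ConjAct G) (Fin n → G)) (x : S) :
    stabilizer (ConjAct G) x = stabilizer (ConjAct G) (x : Fin n → G) := by
  ext g
  simp only [mem_stabilizer_iff]
  constructor
  · intro h
    have := congrArg Subtype.val h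
    simpa using this
  · intro h
    exact Subtype.ext (by simpa using h)

theorem mem_stab_iff {n : ℕ} (x : Fin n → G) (g : ConjAct G) :
    g ∈ stabilizer (ConjAct G) x ↔
      ∀ i, ConjAct.ofConjAct g * x i = x i * ConjAct.ofConjAct g := by
  simp only [mem_stabilizer_iff, funext_iff, Pi.smul_apply, ConjAct.smul_def]
  constructor <;> intro h i <;> have hi := h i
  · have h2 : ConjAct.ofConjAct g * x i * (ConjAct.ofConjAct g)⁻¹ * ConjAct.ofConjAct g
        = x i * ConjAct.ofConjAct g := by rw [hi]
    simpa [mul_assoc] using h2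
  · rw [hi]
    simp [mul_assoc]

theorem card_comap_ofConjAct (S : Subgroup G) :
    Nat.card (S.comap (ConjAct.ofConjAct.toMonoidHom : ConjAct G →* G)) = Nat.card S :=
  Nat.card_congr
    { toFun := fun g => ⟨ConjAct.ofConjAct g.1, g.2⟩
      invFun := fun s => ⟨ConjAct.toConjAct s.1, by
        simp only [Subgroup.mem_comap]
        simpa using s.2⟩
      left_inv := fun g => Subtype.ext (ConjAct.toConjAct_ofConjAct _)
      right_inv := fun s => Subtype.ext (ConjAct.ofConjAct_toConjAct _) }

theorem stab_pieceN (hHbot : H ≠ ⊥)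
    (hfrob : ∀ g : G, g ∉ H → H ⊓ H.map (MulAut.conj g).toMonoidHom = ⊥)
    (hN : (N : Set G) =
      (Set.univ \ ⋃ g : G, (H.map (MulAut.conj g).toMonoidHom : Set G)) ∪ {1})
    (hNab : ∀ x ∈ N, ∀ y ∈ N, x * y = y * x) {n : ℕ} (x : pieceN H N n hN) :
    Nat.card (stabilizer (ConjAct G) x) = Nat.card N := by
  rw [stab_eq_ambient]
  obtain ⟨hmem, hne⟩ := x.2
  obtain ⟨i0, hi0⟩ := not_forall.1 hne
  have heq : stabilizer (ConjAct G) (x : Fin n → G) =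
      N.comap (ConjAct.ofConjAct.toMonoidHom : ConjAct G →* G) := by
    ext g
    rw [mem_stab_iff, Subgroup.mem_comap]
    constructor
    · intro h
      exact mem_N_of_commute hHbot hfrob hN (hmem i0) hi0 (h i0)
    · intro h i
      exact hNab _ h _ (hmem i)
  rw [heq, card_comap_ofConjAct]

theorem stab_pieceH [Finite G] (hHbot : H ≠ ⊥)
    (hfrob : ∀ g : G, g ∉ H → H ⊓ H.map (MulAut.conj g).toMonoidHom = ⊥)
    (hHab : ∀ x ∈ H, ∀ y ∈ H, x * y = y * x) {n : ℕ} (x : pieceH H n) :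
    Nat.card (stabilizer (ConjAct G) x) = Nat.card H := by
  obtain ⟨⟨a, ha⟩, hne⟩ := x.2
  obtain ⟨i0, hi0⟩ := not_forall.1 hne
  rw [stab_eq_ambient]
  have : stabilizer (ConjAct G) (x : Fin n → G) =
      (conjSub H a).comap (ConjAct.ofConjAct.toMonoidHom : ConjAct G →* G) := by
    ext g
    rw [mem_stab_iff, Subgroup.mem_comap]
    constructor
    · intro h
      exact mem_conjSub_of_commute hHbot hfrob (ha i0) hi0 (h i0)
    · intro h i
      exact conjSub_comm hHab h (ha i)
  rw [this, card_comap_ofConjAct, card_conjSub]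

end Stab

section Partition

variable {G : Type*} [Group G] (H N : Subgroup G)

variable (hHbot : H ≠ ⊥)
  (hfrob : ∀ g : G, g ∉ H → H ⊓ H.map (MulAut.conj g).toMonoidHom = ⊥)
  (hN : (N : Set G) =
      (Set.univ \ ⋃ g : G, (H.map (MulAut.conj g).toMonoidHom : Set G)) ∪ {1})
  (hNab : ∀ x ∈ N, ∀ y ∈ N, x * y = y * x)
  (hHab : ∀ x ∈ H, ∀ y ∈ H, x * y = y * x)

include hHbot hfrob hN hNab hHab in
theorem part_bijective (n : ℕ) :
    Function.Bijective
      (Sum.elim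
        (fun x : pieceOne (G := G) n => (⟨x.1, fun i j => by
          rw [show x.1 i = 1 from x.2 i, show x.1 j = 1 from x.2 j]⟩ : commTuples G n))
        (Sum.elim
          (fun x : pieceN H N n hN => (⟨x.1, fun i j =>
            Commute.eq (hNab _ (x.2.1 j) _ (x.2.1 i)).symm⟩ : commTuples G n))
          (fun x : pieceH H n => (⟨x.1, fun i j => by
            obtain ⟨a, ha⟩ := x.2.1
            exact Commute.eq (conjSub_comm hHab (ha i) (ha j))⟩ : commTuples G n)))) := by
  constructor
  · rintro (x | x | x) (y | y | y) h <;>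
      simp only [Sum.elim_inl, Sum.elim_inr, Subtype.mk.injEq] at h <;>
      replace h : (x.1 : Fin n → G) = y.1 := congrArg (fun z : commTuples G n => (z : Fin n → G)) h
    · exact congrArg Sum.inl (Subtype.ext h)
    · exact absurd (fun i => h ▸ x.2 i) y.2.2
    · exact absurd (fun i => h ▸ x.2 i) y.2.2
    · exact absurd (fun i => h.symm ▸ y.2 i) x.2.2
    · exact congrArg (Sum.inr ∘ Sum.inl) (Subtype.ext h)
    · exfalso
      obtain ⟨i0, hi0⟩ := not_forall.1 x.2.2
      obtain ⟨a, ha⟩ := y.2.1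
      have hxa : x.1 i0 ∈ conjSub H a := by rw [h]; exact ha i0
      exact hi0 (eq_one_of_mem_inter hN (x.2.1 i0) hxa)
    · exact absurd (fun i => h.symm ▸ y.2 i) x.2.2
    · exfalso
      obtain ⟨i0, hi0⟩ := not_forall.1 y.2.2
      obtain ⟨a, ha⟩ := x.2.1
      have hxa : y.1 i0 ∈ conjSub H a := by rw [← h]; exact ha i0
      exact hi0 (eq_one_of_mem_inter hN (y.2.1 i0) hxa)
    · exact congrArg (Sum.inr ∘ Sum.inr) (Subtype.ext h)
  · rintro ⟨x, hx⟩
    by_cases h1 : ∀ i, x i = 1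
    · exact ⟨Sum.inl ⟨x, h1⟩, rfl⟩
    obtain ⟨i0, hi0⟩ := not_forall.1 h1
    rcases mem_N_or_conjSub (H := H) hN (x i0) with hmem | ⟨a, ha⟩
    · exact ⟨Sum.inr (Sum.inl ⟨x, ⟨fun i =>
        mem_N_of_commute hHbot hfrob hN hmem hi0 (hx i i0).eq, h1⟩⟩), rfl⟩
    · exact ⟨Sum.inr (Sum.inr ⟨x, ⟨⟨a, fun i =>
        mem_conjSub_of_commute hHbot hfrob ha hi0 (hx i i0).eq⟩, h1⟩⟩), rfl⟩

end Partition

section Main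

variable {G : Type*} [Group G] [Fintype G] (H N : Subgroup G)
  (hHbot : H ≠ ⊥)
  (hfrob : ∀ g : G, g ∉ H → H ⊓ H.map (MulAut.conj g).toMonoidHom = ⊥)
  (hN : (N : Set G) =
      (Set.univ \ ⋃ g : G, (H.map (MulAut.conj g).toMonoidHom : Set G)) ∪ {1})
  (hNab : ∀ x ∈ N, ∀ y ∈ N, x * y = y * x)
  (hHab : ∀ x ∈ H, ∀ y ∈ H, x * y = y * x)

include hHbot hfrob hN hNab hHab in
theorem beta_split (n : ℕ) :
    Nat.card (Quotient (orbitRel (ConjAct G) (commTuples G n))) =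
      1 + Nat.card (Quotient (orbitRel (ConjAct G) (pieceN H N n hN)))
        + Nat.card (Quotient (orbitRel (ConjAct G) (pieceH H n))) := by
  classical
  let J := Equiv.ofBijective _ (part_bijective H N hHbot hfrob hN hNab hHab n)
  have he : ∀ (g : ConjAct G) s, J (g • s) = g • J s := by
    rintro g (x | x | x) <;> rfl
  have e1 := quotCongr (Γ := ConjAct G) J he
  rw [← Nat.card_congr e1, Nat.card_congr (quotSum (Γ := ConjAct G)), Nat.card_sum,
    Nat.card_congr (quotSum (Γ := ConjAct G)), Nat.card_sum]
  haveI : Subsingleton (pieceOne (G := G) n) :=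
    ⟨fun a b => Subtype.ext (funext fun i => (a.2 i).trans (b.2 i).symm)⟩
  haveI : Nonempty (pieceOne (G := G) n) := ⟨⟨fun _ => 1, fun _ => rfl⟩⟩
  rw [card_quot_one]
  omega

include hHbot hfrob hN hNab hHab in
theorem card_G_split (n : ℕ) :
    Nat.card (commTuples G n) = 1 + (Nat.card N ^ n - 1)
      + Nat.card (G ⧸ H) * (Nat.card H ^ n - 1) := by
  classical
  let J := Equiv.ofBijective _ (part_bijective H N hHbot hfrob hN hNab hHab n)
  rw [← Nat.card_congr J, Nat.card_sum, Nat.card_sum]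
  haveI : Subsingleton (pieceOne (G := G) n) :=
    ⟨fun a b => Subtype.ext (funext fun i => (a.2 i).trans (b.2 i).symm)⟩
  haveI : Nonempty (pieceOne (G := G) n) := ⟨⟨fun _ => 1, fun _ => rfl⟩⟩
  rw [Nat.card_eq_one_iff_unique.2 ⟨inferInstance, inferInstance⟩,
    card_pieceN, card_pieceH H n hHbot hfrob]
  omega

/-- `commTuples G 1` is equivariantly just `G`. -/
def oneTupleEquiv (G : Type*) [Group G] : (commTuples G 1 : Type _) ≃ G where
  toFun x := x.1 0
  invFun g := ⟨fun _ => g, fun i j => by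
    rw [Subsingleton.elim i j]⟩
  left_inv x := Subtype.ext (funext fun i => by rw [Subsingleton.elim i 0])
  right_inv g := rfl

include hHbot hfrob hN hNab hHab in
theorem card_N_eq : Nat.card N = Nat.card (G ⧸ H) := by
  have h1 : Nat.card (commTuples G 1) = Nat.card G :=
    Nat.card_congr (oneTupleEquiv G)
  have h2 := card_G_split H N hHbot hfrob hN hNab hHab 1
  rw [h1] at h2
  have hLag : Nat.card G = Nat.card (G ⧸ H) * Nat.card H :=
    Subgroup.card_eq_card_quotient_mul_card_subgroup H
  have hh1 : 1 ≤ Nat.card H := Nat.one_le_iff_ne_zero.2 Nat.card_pos.ne'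
  have hn1 : 1 ≤ Nat.card N := Nat.one_le_iff_ne_zero.2 Nat.card_pos.ne'
  have hsplit : Nat.card (G ⧸ H) * Nat.card H
      = Nat.card (G ⧸ H) * (Nat.card H - 1) + Nat.card (G ⧸ H) := by
    calc Nat.card (G ⧸ H) * Nat.card H
        = Nat.card (G ⧸ H) * ((Nat.card H - 1) + 1) := by rw [Nat.sub_add_cancel hh1]
      _ = Nat.card (G ⧸ H) * (Nat.card H - 1) + Nat.card (G ⧸ H) := by ring
  simp only [pow_one] at h2
  omega

end Main

section Final

variable {G : Type*} [Group G] [Fintype G] (H N : Subgroup G)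
  (hHbot : H ≠ ⊥)
  (hfrob : ∀ g : G, g ∉ H → H ⊓ H.map (MulAut.conj g).toMonoidHom = ⊥)
  (hN : (N : Set G) =
      (Set.univ \ ⋃ g : G, (H.map (MulAut.conj g).toMonoidHom : Set G)) ∪ {1})
  (hNab : ∀ x ∈ N, ∀ y ∈ N, x * y = y * x)
  (hHab : ∀ x ∈ H, ∀ y ∈ H, x * y = y * x)

include hHbot hfrob hN hNab hHab in
theorem beta_rat (n : ℕ) :
    (betaOrbits G n : ℚ) =
      1 + ((Nat.card N : ℚ) ^ n - 1) / (Nat.card H : ℚ) + ((Nat.card H : ℚ) ^ n - 1) := by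
  have hcg : Nat.card (ConjAct G) = Nat.card G :=
    Nat.card_congr ConjAct.ofConjAct.toEquiv
  have hQN := card_quot_mul (Γ := ConjAct G) (X := pieceN H N n hN) (Nat.card N)
      (stab_pieceN H N hHbot hfrob hN hNab)
  have hQH := card_quot_mul (Γ := ConjAct G) (X := pieceH H n) (Nat.card H)
      (stab_pieceH H hHbot hfrob hHab)
  rw [card_pieceN, hcg] at hQN
  rw [card_pieceH H n hHbot hfrob, hcg] at hQH
  have hNq := card_N_eq H N hHbot hfrob hN hNab hHab
  have hLag : Nat.card G = Nat.card (G ⧸ H) * Nat.card H :=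
    Subgroup.card_eq_card_quotient_mul_card_subgroup H
  have hsplit := beta_split H N hHbot hfrob hN hNab hHab n
  have hh1 : 1 ≤ Nat.card H := Nat.one_le_iff_ne_zero.2 Nat.card_pos.ne'
  have hn1 : 1 ≤ Nat.card N := Nat.one_le_iff_ne_zero.2 Nat.card_pos.ne'
  have hq1 : (0 : ℕ) < Nat.card (G ⧸ H) := Nat.card_pos
  -- cast to ℚ
  have hhQ : (Nat.card H : ℚ) ≠ 0 := by positivity
  have hnQ : (Nat.card N : ℚ) ≠ 0 := by positivity
  have hqQ : (Nat.card (G ⧸ H) : ℚ) ≠ 0 := by positivity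
  have hnn : (1 : ℕ) ≤ Nat.card N ^ n := Nat.one_le_pow _ _ Nat.card_pos
  have hhn : (1 : ℕ) ≤ Nat.card H ^ n := Nat.one_le_pow _ _ Nat.card_pos
  have hggQ : (Nat.card G : ℚ) = (Nat.card N : ℚ) * (Nat.card H : ℚ) := by
    rw [hLag, hNq]; push_cast; ring
  have hQNq : (Nat.card (Quotient (orbitRel (ConjAct G) (pieceN H N n hN))) : ℚ)
      = ((Nat.card N : ℚ) ^ n - 1) / (Nat.card H : ℚ) := by
    have := congrArg (fun k : ℕ => (k : ℚ)) hQN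
    push_cast [Nat.cast_sub hnn] at this
    rw [hggQ] at this
    rw [eq_div_iff hhQ]
    exact mul_right_cancel₀ hnQ (by linear_combination this)
  have hQHq : (Nat.card (Quotient (orbitRel (ConjAct G) (pieceH H n))) : ℚ)
      = (Nat.card H : ℚ) ^ n - 1 := by
    have := congrArg (fun k : ℕ => (k : ℚ)) hQH
    push_cast [Nat.cast_sub hhn] at this
    rw [hggQ, hNq] at this
    exact mul_right_cancel₀ (mul_ne_zero hqQ hhQ) (by linear_combination this)
  have : (betaOrbits G n : ℚ)
      = 1 + (Nat.card (Quotient (orbitRel (ConjAct G) (pieceN H N n hN))) : ℚ)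
        + (Nat.card (Quotient (orbitRel (ConjAct G) (pieceH H n))) : ℚ) := by
    rw [show betaOrbits G n = Nat.card (Quotient (orbitRel (ConjAct G) (commTuples G n)))
      from rfl, hsplit]
    push_cast; ring
  rw [this, hQNq, hQHq]

include hHbot hfrob hN hNab hHab in
theorem conjClasses_card_rat :
    (Nat.card (ConjClasses G) : ℚ) =
      ((Nat.card N : ℚ) - 1) / (Nat.card H : ℚ) + (Nat.card H : ℚ) := by
  have e2 : Quotient (orbitRel (ConjAct G) (commTuples G 1)) ≃
      Quotient (orbitRel (ConjAct G) G) :=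
    quotCongr (oneTupleEquiv G) (fun g x => rfl)
  have e3 : Quotient (orbitRel (ConjAct G) G) ≃ ConjClasses G :=
    Quotient.congrRight (fun a b =>
      iff_of_eq (congrFun (congrFun ConjAct.orbitRel_conjAct a) b))
  have hcard : Nat.card (ConjClasses G) = betaOrbits G 1 :=
    (Nat.card_congr (e2.trans e3)).symm
  rw [hcard, beta_rat H N hHbot hfrob hN hNab hHab 1]
  have hh1 : 1 ≤ Nat.card H := Nat.one_le_iff_ne_zero.2 Nat.card_pos.ne'
  have hhQ : (Nat.card H : ℚ) ≠ 0 := by positivity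
  field_simp
  ring

end Final

/-- For a Frobenius group with abelian kernel `N` and abelian complement `H`:
`k(G) = (|N|-1)/|H| + |H|` and
`β_{G,n} - β_{G,n-1} = (1/|H|)(|N|^n - |N|^{n-1}) + (|H|^n - |H|^{n-1})` for `n ≥ 1`. -/
theorem frobenius_abelian_beta (G : Type*) [Group G] [Fintype G] (H N : Subgroup G)
    (hHbot : H ≠ ⊥) (hHtop : H ≠ ⊤)
    (hfrob : ∀ g : G, g ∉ H → H ⊓ H.map (MulAut.conj g).toMonoidHom = ⊥)
    (hN : (N : Set G) =
      (Set.univ \ ⋃ g : G, (H.map (MulAut.conj g).toMonoidHom : Set G)) ∪ {1})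
    (hNab : ∀ x ∈ N, ∀ y ∈ N, x * y = y * x)
    (hHab : ∀ x ∈ H, ∀ y ∈ H, x * y = y * x) :
    (Nat.card (ConjClasses G) : ℚ) =
        ((Nat.card N : ℚ) - 1) / (Nat.card H : ℚ) + (Nat.card H : ℚ) ∧
      ∀ n : ℕ, 1 ≤ n →
        (betaOrbits G n : ℚ) - (betaOrbits G (n - 1) : ℚ) =
          (1 / (Nat.card H : ℚ)) *
              ((Nat.card N : ℚ) ^ n - (Nat.card N : ℚ) ^ (n - 1)) +
            ((Nat.card H : ℚ) ^ n - (Nat.card H : ℚ) ^ (n - 1)) := by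
  refine ⟨conjClasses_card_rat H N hHbot hfrob hN hNab hHab, ?_⟩
  intro n hn
  obtain ⟨m, rfl⟩ : ∃ m, n = m + 1 := ⟨n - 1, (Nat.succ_pred_eq_of_pos hn).symm⟩
  simp only [Nat.add_sub_cancel]
  rw [beta_rat H N hHbot hfrob hN hNab hHab (m + 1), beta_rat H N hHbot hfrob hN hNab hHab m]
  have hhQ : (Nat.card H : ℚ) ≠ 0 := by
    have : (0 : ℕ) < Nat.card H := Nat.card_pos
    positivity
  field_simp
  ring
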